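/- Quasi-determinant formula and bi-orthogonality of non-commutative Laurent bi-orthogonal polynomials (Theorem 4.2): assume T_n^{(0)} is invertible for every n ≥ 1. For n ≥ 1 define P_n(z) := z^n + Σ_{i=0}^{n−1} ξ_i·z^i with the row vector (ξ_0, …, ξ_{n−1}) := −(m(n), m(n−1), …, m(1))·(T_n^{(0)})⁻¹; define Q_n(z) := z^n − Σ_{i=0}^{n−1} (c_i)*·z^i with the column vector (c_0, …, c_{n−1})ᵀ := (T_n^{(0)})⁻¹·(m(−n), m(−n+1), …, m(−1))ᵀ; define H_n := m(0) − (m(n), …, m(1))·(T_n^{(0)})⁻¹·(m(−n), …, m(−1))ᵀ; and set P_0 := 1, Q_0 := 1, H_0 := m(0). Then for all n, m ∈ ℕ: ⟨P_n, Q_m⟩ = H_n if n = m, and ⟨P_n, Q_m⟩ = 0 if n ≠ m. -/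

import Mathlib

/-- The `n × n` shifted Toeplitz matrix `T_n^{(k)} = (m(k + i − j))_{i,j=0}^{n−1}`. -/
noncomputable def Tmat {R : Type*} [DivisionRing R] (m : ℤ → R) (k : ℤ) (n : ℕ) :
    Matrix (Fin n) (Fin n) R :=
  Matrix.of fun i j => m (k + (i.val : ℤ) - (j.val : ℤ))

/-- The monic non-commutative Laurent bi-orthogonal polynomial
`P_n(z) = z^n + Σ_{i=0}^{n−1} ξ_i z^i`, where
`(ξ_0, …, ξ_{n−1}) = −(m(n), …, m(1))·(T_n^{(0)})⁻¹`, given by its coefficients. -/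
noncomputable def Pp {R : Type*} [DivisionRing R] (m : ℤ → R) (n : ℕ) : ℤ → R := fun i =>
  if i = (n : ℤ) then 1
  else if hi : 0 ≤ i ∧ i < (n : ℤ) then
    -(∑ j : Fin n, m ((n : ℤ) - (j.val : ℤ)) *
      Ring.inverse (Tmat m 0 n) j ⟨i.toNat, by omega⟩)
  else 0

/-- The monic non-commutative Laurent bi-orthogonal polynomial
`Q_n(z) = z^n − Σ_{i=0}^{n−1} (c_i)* z^i`, where
`(c_0, …, c_{n−1})ᵀ = (T_n^{(0)})⁻¹·(m(−n), …, m(−1))ᵀ`, given by its coefficients;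
`s` is the involution. -/
noncomputable def Qq {R : Type*} [DivisionRing R] (m : ℤ → R) (s : R → R) (n : ℕ) :
    ℤ → R := fun i =>
  if i = (n : ℤ) then 1
  else if hi : 0 ≤ i ∧ i < (n : ℤ) then
    -(s (∑ j : Fin n, Ring.inverse (Tmat m 0 n) ⟨i.toNat, by omega⟩ j *
      m (-(n : ℤ) + (j.val : ℤ))))
  else 0

/-- The normalization factor
`H_n = m(0) − (m(n), …, m(1))·(T_n^{(0)})⁻¹·(m(−n), …, m(−1))ᵀ` (with `H_0 = m(0)`). -/
noncomputable def Hnorm {R : Type*} [DivisionRing R] (m : ℤ → R) (n : ℕ) : R :=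
  m 0 - ∑ j : Fin n, ∑ l : Fin n,
    m ((n : ℤ) - (j.val : ℤ)) * Ring.inverse (Tmat m 0 n) j l * m (-(n : ℤ) + (l.val : ℤ))

/-- The pairing `⟨f, g⟩ = Σ_{i,j} f(i)·m(i−j)·(g(j))*` of Laurent polynomials, viewed as
finitely supported coefficient functions `ℤ → R`. -/
noncomputable def pairing {R : Type*} [DivisionRing R] (m : ℤ → R) (s : R → R)
    (f g : ℤ → R) : R :=
  ∑ᶠ (i : ℤ), ∑ᶠ (j : ℤ), f i * m (i - j) * s (g j)

section Aux
variable {R : Type*} [DivisionRing R] (m : ℤ → R) (s : R → R)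

lemma Pp_coe_self (n : ℕ) : Pp m n (n : ℤ) = 1 := by simp [Pp]

lemma Pp_coe_lt (n i : ℕ) (h : i < n) :
    Pp m n (i : ℤ) =
      -(∑ j : Fin n, m ((n : ℤ) - (j.val : ℤ)) * Ring.inverse (Tmat m 0 n) j ⟨i, h⟩) := by
  have h1 : (i : ℤ) ≠ (n : ℤ) := by omega
  have h2 : (0:ℤ) ≤ (i:ℤ) ∧ (i:ℤ) < (n:ℤ) := ⟨by positivity, by exact_mod_cast h⟩
  rw [Pp, if_neg h1, dif_pos h2]
  simp

lemma Pp_zero (n : ℕ) (i : ℤ) (h : ¬(0 ≤ i ∧ i ≤ (n:ℤ))) : Pp m n i = 0 := by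
  rw [Pp, if_neg (by omega), dif_neg (by omega)]

lemma Qq_coe_self (n : ℕ) : Qq m s n (n : ℤ) = 1 := by simp [Qq]

lemma Qq_coe_lt (n i : ℕ) (h : i < n) :
    Qq m s n (i : ℤ) =
      -(s (∑ j : Fin n, Ring.inverse (Tmat m 0 n) ⟨i, h⟩ j * m (-(n : ℤ) + (j.val : ℤ)))) := by
  have h1 : (i : ℤ) ≠ (n : ℤ) := by omega
  have h2 : (0:ℤ) ≤ (i:ℤ) ∧ (i:ℤ) < (n:ℤ) := ⟨by positivity, by exact_mod_cast h⟩
  rw [Qq, if_neg h1, dif_pos h2]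
  simp

lemma Qq_zero (n : ℕ) (i : ℤ) (h : ¬(0 ≤ i ∧ i ≤ (n:ℤ))) : Qq m s n i = 0 := by
  rw [Qq, if_neg (by omega), dif_neg (by omega)]

end Aux

section Aux2
variable {R : Type*} [DivisionRing R] (m : ℤ → R) (s : R → R)

lemma pairing_eq_finsum (f g : ℤ → R) (N K : ℕ)
    (hf : ∀ i : ℤ, f i ≠ 0 → 0 ≤ i ∧ i ≤ (N : ℤ))
    (hg : ∀ j : ℤ, g j ≠ 0 → 0 ≤ j ∧ j ≤ (K : ℤ))
    (hs0 : s 0 = 0) :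
    pairing m s f g =
      ∑ i ∈ Finset.range (N+1), ∑ j ∈ Finset.range (K+1),
        f (i : ℤ) * m ((i : ℤ) - (j : ℤ)) * s (g (j : ℤ)) := by
  have hmem : ∀ (L : ℕ) (j : ℤ), 0 ≤ j → j ≤ (L:ℤ) →
      j ∈ ((Finset.range (L+1)).image (fun a : ℕ => (a : ℤ)) : Finset ℤ) := by
    intro L j h1 h2
    simp only [Finset.mem_image, Finset.mem_range]
    exact ⟨j.toNat, by omega, by omega⟩
  have hinner : ∀ i : ℤ, ∑ᶠ j : ℤ, f i * m (i - j) * s (g j) =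
      ∑ j ∈ (Finset.range (K+1)).image (fun a : ℕ => (a : ℤ)),
        f i * m (i - j) * s (g j) := by
    intro i
    refine finsum_eq_sum_of_support_subset _ ?_
    intro j hj
    have hgj : g j ≠ 0 := by
      intro h0
      apply hj
      simp [h0, hs0]
    exact hmem K j (hg j hgj).1 (hg j hgj).2
  rw [pairing, finsum_congr hinner]
  rw [finsum_eq_sum_of_support_subset _ (s := (Finset.range (N+1)).image (fun a : ℕ => (a : ℤ)))]
  · rw [Finset.sum_image (by intro a _ b _ h; exact Nat.cast_injective h)]
    refine Finset.sum_congr rfl fun i _ => ?_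
    rw [Finset.sum_image (by intro a _ b _ h; exact Nat.cast_injective h)]
  · intro i hi
    have hfi : f i ≠ 0 := by
      intro h0
      apply hi
      simp [h0]
    exact hmem N i (hf i hfi).1 (hf i hfi).2

end Aux2

section Aux3
variable {R : Type*} [DivisionRing R] (m : ℤ → R) (s : R → R)

lemma row_sum (n : ℕ) (j : ℤ) :
    ∑ i ∈ Finset.range n, Pp m n (i : ℤ) * m ((i:ℤ) - j) =
      -(∑ a : Fin n, m ((n:ℤ) - (a.val:ℤ)) *
        ∑ i : Fin n, Ring.inverse (Tmat m 0 n) a i * m ((i.val:ℤ) - j)) := by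
  rw [← Fin.sum_univ_eq_sum_range]
  have h1 : ∀ i : Fin n, Pp m n (i.val : ℤ) * m ((i.val:ℤ) - j) =
      ∑ a : Fin n, -(m ((n:ℤ) - (a.val:ℤ)) *
        (Ring.inverse (Tmat m 0 n) a i * m ((i.val:ℤ) - j))) := by
    intro i
    rw [Pp_coe_lt m n i.val i.isLt, neg_mul, Finset.sum_mul, ← Finset.sum_neg_distrib]
    refine Finset.sum_congr rfl fun a _ => ?_
    simp [mul_assoc]
  rw [Finset.sum_congr rfl fun i _ => h1 i, Finset.sum_comm]
  rw [← Finset.sum_neg_distrib]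
  refine Finset.sum_congr rfl fun a _ => ?_
  rw [Finset.mul_sum, ← Finset.sum_neg_distrib]

lemma rowOrth (n : ℕ) (hT : 1 ≤ n → IsUnit (Tmat m 0 n)) (j : ℕ) (hj : j ≤ n) :
    ∑ i ∈ Finset.range (n+1), Pp m n (i : ℤ) * m ((i:ℤ) - (j:ℤ)) =
      if j = n then Hnorm m n else 0 := by
  rw [Finset.sum_range_succ, Pp_coe_self, one_mul, row_sum]
  rcases eq_or_lt_of_le hj with h | h
  · subst h
    rw [if_pos rfl, Hnorm]
    have : ∀ a : Fin j, m ((j:ℤ) - (a.val:ℤ)) *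
        ∑ i : Fin j, Ring.inverse (Tmat m 0 j) a i * m ((i.val:ℤ) - (j:ℤ)) =
        ∑ i : Fin j, m ((j:ℤ) - (a.val:ℤ)) * Ring.inverse (Tmat m 0 j) a i *
          m (-(j:ℤ) + (i.val:ℤ)) := by
      intro a
      rw [Finset.mul_sum]
      refine Finset.sum_congr rfl fun i _ => ?_
      rw [mul_assoc]
      have harg : ((i.val:ℤ) - (j:ℤ)) = (-(j:ℤ) + (i.val:ℤ)) := by omega
      rw [harg]
    rw [Finset.sum_congr rfl fun a _ => this a]
    rw [neg_add_eq_sub]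
    norm_num
  · rw [if_neg (by omega)]
    have hn : 1 ≤ n := by omega
    have key : ∀ a : Fin n, (∑ i : Fin n, Ring.inverse (Tmat m 0 n) a i * m ((i.val:ℤ) - (j:ℤ)))
        = (Ring.inverse (Tmat m 0 n) * Tmat m 0 n) a ⟨j, h⟩ := by
      intro a
      rw [Matrix.mul_apply]
      refine Finset.sum_congr rfl fun i _ => ?_
      congr 1
      show _ = m (0 + (i.val:ℤ) - (j:ℤ))
      congr 1
      omega
    rw [Finset.sum_congr rfl fun a _ => by rw [key a]]
    rw [Ring.inverse_mul_cancel _ (hT hn)]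
    simp [Matrix.one_apply, Finset.sum_ite_eq']

end Aux3

section Aux4
variable {R : Type*} [DivisionRing R] (m : ℤ → R) (s : R → R)

lemma colOrth (hs1 : s 1 = 1) (hsneg : ∀ x : R, s (-(s x)) = -x)
    (k : ℕ) (hT : IsUnit (Tmat m 0 k)) (i : ℕ) (hik : i < k) :
    ∑ j ∈ Finset.range (k+1), m ((i:ℤ) - (j:ℤ)) * s (Qq m s k (j:ℤ)) = 0 := by
  rw [Finset.sum_range_succ, Qq_coe_self, hs1, mul_one]
  have h1 : ∑ j ∈ Finset.range k, m ((i:ℤ) - (j:ℤ)) * s (Qq m s k (j:ℤ)) =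
      ∑ l : Fin k, (-((Tmat m 0 k * Ring.inverse (Tmat m 0 k)) ⟨i, hik⟩ l *
        m (-(k:ℤ) + (l.val:ℤ)))) := by
    rw [← Fin.sum_univ_eq_sum_range]
    have h2 : ∀ j : Fin k, m ((i:ℤ) - (j.val:ℤ)) * s (Qq m s k (j.val:ℤ)) =
        ∑ l : Fin k, (-(m ((i:ℤ) - (j.val:ℤ)) * Ring.inverse (Tmat m 0 k) j l *
          m (-(k:ℤ) + (l.val:ℤ)))) := by
      intro j
      rw [Qq_coe_lt m s k j.val j.isLt, hsneg, Fin.eta, mul_neg, Finset.mul_sum,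
        ← Finset.sum_neg_distrib]
      refine Finset.sum_congr rfl fun l _ => ?_
      rw [mul_assoc]
    rw [Finset.sum_congr rfl fun j _ => h2 j, Finset.sum_comm]
    refine Finset.sum_congr rfl fun l _ => ?_
    rw [Matrix.mul_apply, Finset.sum_mul, ← Finset.sum_neg_distrib]
    refine Finset.sum_congr rfl fun j _ => ?_
    have hTij : Tmat m 0 k ⟨i, hik⟩ j = m ((i:ℤ) - (j.val:ℤ)) := by
      show m (0 + (i:ℤ) - (j.val:ℤ)) = _
      congr 1
      omega
    rw [hTij]
  rw [h1, Ring.mul_inverse_cancel _ hT, Finset.sum_neg_distrib]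
  simp only [Matrix.one_apply, ite_mul, one_mul, zero_mul, Finset.sum_ite_eq,
    Finset.mem_univ, if_pos]
  have harg : (-(k:ℤ) + (((⟨i, hik⟩ : Fin k) : ℕ) :ℤ)) = ((i:ℤ) - (k:ℤ)) := by
    show (-(k:ℤ) + (i:ℤ)) = _
    omega
  rw [harg, neg_add_cancel]

end Aux4

theorem stmt_13 {R : Type*} [DivisionRing R] (m : ℤ → R) (s : R → R)
    (hs_add : ∀ a b : R, s (a + b) = s a + s b)
    (hs_mul : ∀ a b : R, s (a * b) = s b * s a)
    (hs_invol : ∀ a : R, s (s a) = a)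
    (hs_one : s 1 = 1)
    (hT : ∀ n : ℕ, 1 ≤ n → IsUnit (Tmat m 0 n)) :
    ∀ n k : ℕ, pairing m s (Pp m n) (Qq m s k) = if n = k then Hnorm m n else 0 := by
  have hs0 : s 0 = 0 := by
    have := hs_add 0 0
    rw [add_zero] at this
    exact left_eq_add.mp this
  have hsneg : ∀ x : R, s (-(s x)) = -x := by
    intro x
    have h1 : s (s x + -(s x)) = 0 := by rw [add_neg_cancel, hs0]
    rw [hs_add, hs_invol] at h1
    linear_combination (norm := noncomm_ring) h1
  intro n k
  rw [pairing_eq_finsum m s _ _ n k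
    (fun i hi => by by_contra h; exact hi (Pp_zero m n i (by omega)))
    (fun j hj => by by_contra h; exact hj (Qq_zero m s k j (by omega))) hs0]
  rcases lt_trichotomy n k with h | h | h
  · rw [if_neg (by omega)]
    refine Finset.sum_eq_zero fun i hi => ?_
    have hik : i < k := by
      have := Finset.mem_range.mp hi
      omega
    have : ∑ j ∈ Finset.range (k+1), Pp m n (i:ℤ) * (m ((i:ℤ) - (j:ℤ)) * s (Qq m s k (j:ℤ)))
        = Pp m n (i:ℤ) * ∑ j ∈ Finset.range (k+1), m ((i:ℤ) - (j:ℤ)) * s (Qq m s k (j:ℤ)) :=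
      (Finset.mul_sum _ _ _).symm
    calc ∑ j ∈ Finset.range (k+1), Pp m n (i:ℤ) * m ((i:ℤ) - (j:ℤ)) * s (Qq m s k (j:ℤ))
        = Pp m n (i:ℤ) * ∑ j ∈ Finset.range (k+1), m ((i:ℤ) - (j:ℤ)) * s (Qq m s k (j:ℤ)) := by
          rw [← this]
          exact Finset.sum_congr rfl fun j _ => mul_assoc _ _ _
      _ = 0 := by rw [colOrth m s hs_one hsneg k (hT k (by omega)) i hik, mul_zero]
  · subst h
    rw [if_pos rfl, Finset.sum_comm]
    have hstep : ∀ j ∈ Finset.range (n+1),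
        ∑ i ∈ Finset.range (n+1), Pp m n (i:ℤ) * m ((i:ℤ) - (j:ℤ)) * s (Qq m s n (j:ℤ))
        = (if j = n then Hnorm m n else 0) * s (Qq m s n (j:ℤ)) := by
      intro j hj
      rw [← Finset.sum_mul, rowOrth m n (hT n) j (by have := Finset.mem_range.mp hj; omega)]
    rw [Finset.sum_congr rfl hstep]
    simp only [ite_mul, zero_mul, Finset.sum_ite_eq', Finset.mem_range, lt_add_iff_pos_left]
    rw [if_pos (by omega), Qq_coe_self, hs_one, mul_one]
  · rw [if_neg (by omega), Finset.sum_comm]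
    refine Finset.sum_eq_zero fun j hj => ?_
    have hjn : j ≤ n ∧ j ≠ n := by
      have := Finset.mem_range.mp hj
      omega
    rw [← Finset.sum_mul, rowOrth m n (hT n) j hjn.1, if_neg hjn.2, zero_mul]
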